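/- For t > 0, the integral of the complementary error function integral_{-infinity}^{-a/sqrt(2)} erfc(-((1+t)x + a t/sqrt(2)) / sqrt(t(t+1))) dx equals sqrt(t/(t+1)) * ( -(a/sqrt(2 t (t+1))) * erfc(a / sqrt(2 t (t+1))) + (1/sqrt(pi)) * exp(-a^2/(2 t (t+1))) ), for all a > 0. -/

import Mathlib

open MeasureTheory Real
open Set Filter Topology

/-- The complementary error function. -/
noncomputable def erfc (x : ℝ) : ℝ :=
  1 - (2 / Real.sqrt Real.pi) * ∫ u in (0 : ℝ)..x, Real.exp (-u ^ 2)

lemma integrable_gauss : Integrable (fun u : ℝ => Real.exp (-u ^ 2)) := by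
  simpa using integrable_exp_neg_mul_sq (one_pos)

lemma erfc_eq {x : ℝ} (hx : 0 ≤ x) :
    erfc x = (2 / Real.sqrt Real.pi) * ∫ u in Ioi x, Real.exp (-u ^ 2) := by
  have h0 : (∫ u in Ioi (0:ℝ), Real.exp (-u ^ 2)) = Real.sqrt Real.pi / 2 := by
    simpa using integral_gaussian_Ioi 1
  have hsplit : (∫ u in Ioi (0:ℝ), Real.exp (-u ^ 2))
      = (∫ u in Ioc 0 x, Real.exp (-u ^ 2)) + ∫ u in Ioi x, Real.exp (-u ^ 2) := by
    rw [← setIntegral_union (Ioc_disjoint_Ioi le_rfl) measurableSet_Ioi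
      integrable_gauss.integrableOn integrable_gauss.integrableOn,
      Ioc_union_Ioi_eq_Ioi hx]
  have hic : (∫ u in (0:ℝ)..x, Real.exp (-u ^ 2)) = ∫ u in Ioc 0 x, Real.exp (-u ^ 2) :=
    intervalIntegral.integral_of_le hx
  have hπ : Real.sqrt Real.pi ≠ 0 := by positivity
  rw [erfc, hic]
  have : (∫ u in Ioc 0 x, Real.exp (-u ^ 2))
      = Real.sqrt Real.pi / 2 - ∫ u in Ioi x, Real.exp (-u ^ 2) := by
    rw [← h0, hsplit]; ring
  rw [this]
  field_simp
  ring

lemma erfc_nonneg {x : ℝ} (hx : 0 ≤ x) : 0 ≤ erfc x := by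
  rw [erfc_eq hx]
  have : 0 ≤ ∫ u in Ioi x, Real.exp (-u ^ 2) :=
    setIntegral_nonneg measurableSet_Ioi fun u _ => (Real.exp_pos _).le
  positivity

lemma integrableOn_exp_neg_Ioi' (x : ℝ) : IntegrableOn (fun u : ℝ => Real.exp (-u)) (Ioi x) := by
  have := exp_neg_integrableOn_Ioi x one_pos
  simpa using this

lemma erfc_le {x : ℝ} (hx : 1 ≤ x) :
    erfc x ≤ (2 / Real.sqrt Real.pi) * Real.exp (-x) := by
  rw [erfc_eq (by linarith)]
  have hmono : (∫ u in Ioi x, Real.exp (-u ^ 2)) ≤ ∫ u in Ioi x, Real.exp (-u) := by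
    refine setIntegral_mono_on integrable_gauss.integrableOn (integrableOn_exp_neg_Ioi' x)
      measurableSet_Ioi fun u hu => ?_
    have h1 : (1:ℝ) ≤ u := le_trans hx (le_of_lt hu)
    have : u ≤ u ^ 2 := by nlinarith
    exact Real.exp_le_exp.2 (by linarith)
  have hint : (∫ u in Ioi x, Real.exp (-u)) = Real.exp (-x) := integral_exp_neg_Ioi x
  have hc : (0:ℝ) ≤ 2 / Real.sqrt Real.pi := by positivity
  calc (2 / Real.sqrt Real.pi) * ∫ u in Ioi x, Real.exp (-u ^ 2)
      ≤ (2 / Real.sqrt Real.pi) * ∫ u in Ioi x, Real.exp (-u) := by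
        exact mul_le_mul_of_nonneg_left hmono hc
    _ = (2 / Real.sqrt Real.pi) * Real.exp (-x) := by rw [hint]

lemma hasDerivAt_erfc (x : ℝ) :
    HasDerivAt erfc (-(2 / Real.sqrt Real.pi * Real.exp (-x ^ 2))) x := by
  have hcont : Continuous fun u : ℝ => Real.exp (-u ^ 2) := by continuity
  have h1 : HasDerivAt (fun y : ℝ => ∫ u in (0:ℝ)..y, Real.exp (-u ^ 2))
      (Real.exp (-x ^ 2)) x :=
    intervalIntegral.integral_hasDerivAt_right (hcont.intervalIntegrable _ _)
      (hcont.stronglyMeasurableAtFilter _ _) hcont.continuousAt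
  have := ((h1.const_mul (2 / Real.sqrt Real.pi)).const_sub 1)
  exact this

lemma tendsto_erfc : Tendsto erfc atTop (𝓝 0) := by
  have hb : Tendsto (fun x : ℝ => (2 / Real.sqrt Real.pi) * Real.exp (-x)) atTop (𝓝 0) := by
    simpa using (Real.tendsto_exp_neg_atTop_nhds_zero.const_mul (2 / Real.sqrt Real.pi))
  refine squeeze_zero' ?_ ?_ hb
  · filter_upwards [eventually_ge_atTop (1:ℝ)] with x hx
    exact erfc_nonneg (by linarith)
  · filter_upwards [eventually_ge_atTop (1:ℝ)] with x hx
    exact erfc_le hx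

lemma tendsto_mul_erfc : Tendsto (fun u : ℝ => u * erfc u) atTop (𝓝 0) := by
  have hb : Tendsto (fun x : ℝ => (2 / Real.sqrt Real.pi) * (x * Real.exp (-x))) atTop (𝓝 0) := by
    have := Real.tendsto_pow_mul_exp_neg_atTop_nhds_zero 1
    simpa using this.const_mul (2 / Real.sqrt Real.pi)
  refine squeeze_zero' ?_ ?_ hb
  · filter_upwards [eventually_ge_atTop (1:ℝ)] with x hx
    exact mul_nonneg (by linarith) (erfc_nonneg (by linarith))
  · filter_upwards [eventually_ge_atTop (1:ℝ)] with x hx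
    have := erfc_le hx
    calc x * erfc x ≤ x * ((2 / Real.sqrt Real.pi) * Real.exp (-x)) :=
          mul_le_mul_of_nonneg_left this (by linarith)
      _ = (2 / Real.sqrt Real.pi) * (x * Real.exp (-x)) := by ring

lemma erfc_integral_Ioi {b : ℝ} (hb : 0 < b) :
    ∫ u in Ioi b, erfc u
      = Real.exp (-b ^ 2) / Real.sqrt Real.pi - b * erfc b := by
  have hderiv : ∀ u ∈ Ici b,
      HasDerivAt (fun u : ℝ => u * erfc u - Real.exp (-u ^ 2) / Real.sqrt Real.pi)
        (erfc u) u := by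
    intro u _
    have h1 : HasDerivAt (fun u : ℝ => u * erfc u)
        (1 * erfc u + u * -(2 / Real.sqrt Real.pi * Real.exp (-u ^ 2))) u :=
      (hasDerivAt_id u).mul (hasDerivAt_erfc u)
    have h2 : HasDerivAt (fun u : ℝ => Real.exp (-u ^ 2) / Real.sqrt Real.pi)
        (Real.exp (-u ^ 2) * -(2 * u ^ 1) / Real.sqrt Real.pi) u :=
      (((hasDerivAt_pow 2 u).neg).exp).div_const _
    have h := h1.sub h2
    convert h using 1
    have hπ : Real.sqrt Real.pi ≠ 0 := by positivity
    · rfl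
    · rfl
    · rfl
    ring
  have hpos : ∀ u ∈ Ioi b, 0 ≤ erfc u := fun u hu => erfc_nonneg (le_of_lt (hb.trans hu))
  have htd : Tendsto (fun u : ℝ => u * erfc u - Real.exp (-u ^ 2) / Real.sqrt Real.pi)
      atTop (𝓝 0) := by
    have h2 : Tendsto (fun u : ℝ => Real.exp (-u ^ 2)) atTop (𝓝 0) := by
      have := Real.tendsto_exp_neg_atTop_nhds_zero.comp
        (tendsto_pow_atTop (two_ne_zero) : Tendsto (fun u : ℝ => u ^ 2) atTop atTop)
      simpa [Function.comp] using this
    simpa using tendsto_mul_erfc.sub (h2.div_const (Real.sqrt Real.pi))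
  have := integral_Ioi_of_hasDerivAt_of_nonneg' hderiv hpos htd
  rw [this]; ring

lemma integral_comp_affine_Iio (g : ℝ → ℝ) (c β : ℝ) {α : ℝ} (hα : α < 0) :
    ∫ x in Iio c, g (α * x + β) = |α|⁻¹ * ∫ u in Ioi (α * c + β), g u := by
  have hind : ∀ x : ℝ, (Iio c).indicator (fun x => g (α * x + β)) x
      = (Ioi (α * c + β)).indicator g (α * x + β) := by
    intro x
    by_cases h : x < c
    · rw [Set.indicator_of_mem (show x ∈ Iio c from h), Set.indicator_of_mem]
      exact mem_Ioi.mpr (by linarith [mul_lt_mul_of_neg_left h hα])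
    · rw [Set.indicator_of_notMem (show x ∉ Iio c from h), Set.indicator_of_notMem]
      intro hmem
      apply h
      by_contra hcx
      push_neg at hcx
      have h1 := mul_le_mul_of_nonpos_left hcx hα.le
      have h2 := mem_Ioi.mp hmem
      linarith
  rw [← integral_indicator measurableSet_Iio]
  calc (∫ x, (Iio c).indicator (fun x => g (α * x + β)) x)
      = ∫ x, (fun y : ℝ => (Ioi (α * c + β)).indicator g (y + β)) (α * x) := by
        simp_rw [hind]
    _ = |α⁻¹| • ∫ y, (Ioi (α * c + β)).indicator g (y + β) := by
        simpa using Measure.integral_comp_mul_left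
          (fun y => (Ioi (α * c + β)).indicator g (y + β)) α
    _ = |α|⁻¹ * ∫ u in Ioi (α * c + β), g u := by
        rw [integral_add_right_eq_self, integral_indicator measurableSet_Ioi,
          abs_inv, smul_eq_mul]

/-- An auxiliary erfc integral:
`∫_{-∞}^{-a/√2} erfc(-((1+t)x + at/√2)/√(t(t+1))) dx
  = √(t/(t+1)) (-(a/√(2t(t+1))) erfc(a/√(2t(t+1))) + (1/√π) e^{-a²/(2t(t+1))})`. -/
theorem erfc_integral_aux (a t : ℝ) (ha : 0 < a) (ht : 0 < t) :
    ∫ x in Set.Iio (-(a / Real.sqrt 2)),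
        erfc (-((1 + t) * x + a * t / Real.sqrt 2) / Real.sqrt (t * (t + 1)))
      = Real.sqrt (t / (t + 1))
          * (-(a / Real.sqrt (2 * t * (t + 1))) * erfc (a / Real.sqrt (2 * t * (t + 1)))
            + (1 / Real.sqrt Real.pi) * Real.exp (-a ^ 2 / (2 * t * (t + 1)))) := by
  have ht1 : (0:ℝ) < t + 1 := by linarith
  set s := Real.sqrt (t * (t + 1)) with hs
  have hspos : 0 < s := Real.sqrt_pos.mpr (by positivity)
  set α := -((1 + t) / s) with hαdef
  set β := -(a * t / Real.sqrt 2) / s with hβdef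
  have hα : α < 0 := by
    have : 0 < (1 + t) / s := by positivity
    rw [hαdef]; linarith
  have harg : ∀ x : ℝ, -((1 + t) * x + a * t / Real.sqrt 2) / s = α * x + β := by
    intro x; rw [hαdef, hβdef]; ring
  have h1 : (∫ x in Iio (-(a / Real.sqrt 2)),
        erfc (-((1 + t) * x + a * t / Real.sqrt 2) / s))
      = ∫ x in Iio (-(a / Real.sqrt 2)), erfc (α * x + β) :=
    setIntegral_congr_fun measurableSet_Iio (fun x _ => by rw [harg x])
  rw [h1, integral_comp_affine_Iio erfc _ _ hα]
  set b := a / Real.sqrt (2 * t * (t + 1)) with hbdef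
  have h2s : Real.sqrt (2 * t * (t + 1)) = Real.sqrt 2 * s := by
    rw [hs, show 2 * t * (t + 1) = 2 * (t * (t + 1)) by ring,
      Real.sqrt_mul (by norm_num)]
  have h2pos : (0:ℝ) < Real.sqrt 2 := by positivity
  have harg2 : α * (-(a / Real.sqrt 2)) + β = b := by
    rw [hαdef, hβdef, hbdef, h2s]
    field_simp
    ring
  have hbpos : 0 < b := by
    rw [hbdef, h2s]; positivity
  rw [harg2, erfc_integral_Ioi hbpos]
  have habs : |α|⁻¹ = Real.sqrt (t / (t + 1)) := by
    rw [hαdef, abs_neg, abs_of_pos (by positivity), inv_div]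
    rw [show t / (t + 1) = t * (t + 1) / (1 + t) ^ 2 by field_simp; ring]
    rw [Real.sqrt_div (by positivity), Real.sqrt_sq (by positivity), hs]
  have hb2 : -a ^ 2 / (2 * t * (t + 1)) = -(b ^ 2) := by
    rw [hbdef, div_pow, Real.sq_sqrt (by positivity)]; ring
  rw [habs, hb2]
  ring
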